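/- For any finite word poset (P, s), there exists a word w over S such that (P, s) is isomorphic to (P(w), i ↦ w_i) as labeled posets; explicitly, if e : P → {1,...,|P|} is any linear extension and w_i = s(e^{-1}(i)), then e is an isomorphism P → P(w). -/

import Mathlib

def WStep {S : Type*} (comm : S → S → Prop) (w : List S) (i j : Fin w.length) : Prop :=
  i ≤ j ∧ (w.get i = w.get j ∨ ¬ comm (w.get i) (w.get j))

/-- The word-poset order `≤_w` on positions of `w`. -/
def WLe {S : Type*} (comm : S → S → Prop) (w : List S) : Fin w.length → Fin w.length → Prop :=
  Relation.TransGen (WStep comm w)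

theorem abstract_word_poset_is_word_poset_of_word {S : Type*} (comm : S → S → Prop)
    (hsym : ∀ a b, comm a b → comm b a) (hirr : ∀ a, ¬ comm a a)
    (P : Type*) [PartialOrder P] [Fintype P] (s : P → S)
    (ha : ∀ u v : P, (s u = s v ∨ ¬ comm (s u) (s v)) → u ≤ v ∨ v ≤ u)
    (hb : ∀ u v : P, u ⋖ v → (s u = s v ∨ ¬ comm (s u) (s v)))
    (e : P ≃ Fin (Fintype.card P)) (he : ∀ u v : P, u ≤ v → e u ≤ e v) :
    ∃ g : P → Fin (List.ofFn (fun i => s (e.symm i))).length,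
      Function.Bijective g ∧
      (∀ u, (List.ofFn (fun i => s (e.symm i))).get (g u) = s u) ∧
      (∀ u v, u ≤ v ↔ WLe comm (List.ofFn (fun i => s (e.symm i))) (g u) (g v)) ∧
      (∀ u, (g u : ℕ) = e u) := by
  classical
  set w := List.ofFn (fun i => s (e.symm i)) with hw
  have hlen : w.length = Fintype.card P := List.length_ofFn
  set g : P → Fin w.length := fun u => Fin.cast hlen.symm (e u) with hg
  have hget : ∀ u, w.get (g u) = s u := by
    intro u
    simp [hw, hg, List.get_ofFn]
  have hbij : Function.Bijective g := by
    refine ⟨fun a b hab => ?_, fun i => ⟨e.symm (Fin.cast hlen i), ?_⟩⟩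
    · have : e a = e b := by
        apply Fin.ext
        simpa [hg] using congrArg Fin.val hab
      exact e.injective this
    · simp [hg]
  letI : LocallyFiniteOrder P := Fintype.toLocallyFiniteOrder
  refine ⟨g, hbij, hget, fun u v => ⟨fun huv => ?_, fun h => ?_⟩, fun u => rfl⟩
  · -- forward
    have := (le_iff_reflTransGen_covBy.mp huv)
    induction this with
    | refl =>
        exact Relation.TransGen.single ⟨le_refl _, Or.inl rfl⟩
    | tail h₁ h₂ ih =>
        rename_i b c
        refine Relation.TransGen.tail (ih ?_) ?_
        · exact le_iff_reflTransGen_covBy.mpr h₁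
        · refine ⟨?_, ?_⟩
          · exact he _ _ h₂.le
          · rw [hget, hget]; exact hb _ _ h₂
  · -- backward
    have step : ∀ i j : Fin w.length, WStep comm w i j →
        e.symm (Fin.cast hlen i) ≤ e.symm (Fin.cast hlen j) := by
      rintro i j ⟨hle, hlab⟩
      have hlab' : s (e.symm (Fin.cast hlen i)) = s (e.symm (Fin.cast hlen j)) ∨
          ¬ comm (s (e.symm (Fin.cast hlen i))) (s (e.symm (Fin.cast hlen j))) := by
        simpa [hw, List.get_ofFn, Fin.cast] using hlab
      rcases ha _ _ hlab' with h | h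
      · exact h
      · have h2 : e (e.symm (Fin.cast hlen j)) ≤ e (e.symm (Fin.cast hlen i)) := he _ _ h
        simp only [Equiv.apply_symm_apply] at h2
        have : (i : ℕ) = (j : ℕ) := le_antisymm hle h2
        have : i = j := Fin.ext this
        subst this
        exact le_refl _
    have key : ∀ i j : Fin w.length, Relation.TransGen (WStep comm w) i j →
        e.symm (Fin.cast hlen i) ≤ e.symm (Fin.cast hlen j) := by
      intro i j hij
      induction hij with
      | single hs => exact step _ _ hs
      | tail _ hs ih => exact le_trans ih (step _ _ hs)
    have := key (g u) (g v) h
    simpa [hg] using this
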